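/- Let G=(V,E) be a simple directed graph on V=[p] containing all self-loops, and let C be any symmetric positive definite p×p real matrix. Then the graphical continuous Lyapunov model M_{G,C} is globally identifiable; equivalently, if M₁,M₂ ∈ ℝ^E are stable and a positive definite matrix Σ satisfies both M₁Σ+ΣM₁^⊤+C=0 and M₂Σ+ΣM₂^⊤+C=0, then M₁=M₂. -/

import Mathlib

open Matrix MeasureTheory

/-- A real square matrix is *stable* if every eigenvalue (over `ℂ`) has strictly
negative real part. -/
def IsStableMat {n : Type*} [Fintype n] [DecidableEq n] (M : Matrix n n ℝ) : Prop :=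
  ∀ μ ∈ spectrum ℂ (M.map (algebraMap ℝ ℂ)), μ.re < 0

/-- `M ∈ ℝ^E`: the matrix `M` is supported on the directed graph with edge set `E`,
i.e. `M j i = 0` whenever `(i, j) ∉ E`. -/
def InSupp {n : Type*} (E : Set (n × n)) (M : Matrix n n ℝ) : Prop :=
  ∀ i j : n, (i, j) ∉ E → M j i = 0

/-- The graphical continuous Lyapunov model `M_{G,C}`: positive definite matrices `S`
such that `M * S + S * Mᵀ + C = 0` for some `M ∈ ℝ^E`. -/
def LyapModel {n : Type*} [Fintype n] [DecidableEq n] (E : Set (n × n))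
    (C : Matrix n n ℝ) : Set (Matrix n n ℝ) :=
  {S | S.PosDef ∧ ∃ M : Matrix n n ℝ, InSupp E M ∧ M * S + S * Mᵀ + C = 0}

/-- Global identifiability: no two stable matrices supported on `E` yield the same
solution of the Lyapunov equation.  (Since for stable `M` the Lyapunov equation has a
unique positive definite solution `Σ(M,C)`, this is equivalent to every fiber
`F_{G,C}(M₀)` being the singleton `{M₀}`.) -/
def GloballyIdentifiable {n : Type*} [Fintype n] [DecidableEq n] (E : Set (n × n))
    (C : Matrix n n ℝ) : Prop :=
  ∀ M₁ M₂ : Matrix n n ℝ,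
    InSupp E M₁ → IsStableMat M₁ → InSupp E M₂ → IsStableMat M₂ →
    ∀ S : Matrix n n ℝ, S.PosDef →
      M₁ * S + S * M₁ᵀ + C = 0 → M₂ * S + S * M₂ᵀ + C = 0 → M₁ = M₂

/-- A directed graph is *simple* if it has no 2-cycles between distinct nodes. -/
def IsSimpleDigraph {n : Type*} (E : Set (n × n)) : Prop :=
  ∀ i j : n, i ≠ j → (i, j) ∈ E → (j, i) ∉ E

/-- The fiber `F_{G,C}(M₀)`: all stable matrices supported on `E` whose Lyapunov
solution coincides with that of `M₀`, i.e. some positive definite `S` solves the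
Lyapunov equation for both `M₀` and `M`. -/
def Fiber {n : Type*} [Fintype n] [DecidableEq n] (E : Set (n × n))
    (C M₀ : Matrix n n ℝ) : Set (Matrix n n ℝ) :=
  {M | InSupp E M ∧ IsStableMat M ∧
    ∃ S : Matrix n n ℝ, S.PosDef ∧ M₀ * S + S * M₀ᵀ + C = 0 ∧ M * S + S * Mᵀ + C = 0}

/-- The identification of the coordinate space `ℝ^{|E|}` with the matrices in `ℝ^E`:
the coordinate attached to an edge `(i,j)` is the entry `M j i`. -/
def edgeMatrix {p : ℕ} (E : Finset (Fin p × Fin p)) (f : E → ℝ) :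
    Matrix (Fin p) (Fin p) ℝ :=
  fun j i => if h : (i, j) ∈ E then f ⟨(i, j), h⟩ else 0

/-- Generic identifiability: the set of parameter vectors `f ∈ ℝ^{|E|}` whose matrix
is stable but whose fiber is not a singleton is a Lebesgue null set. -/
def GenericallyIdentifiable {p : ℕ} (E : Finset (Fin p × Fin p))
    (C : Matrix (Fin p) (Fin p) ℝ) : Prop :=
  volume {f : E → ℝ | IsStableMat (edgeMatrix E f) ∧
    Fiber (E : Set (Fin p × Fin p)) C (edgeMatrix E f) ≠ {edgeMatrix E f}} = 0

/-- simple graphs (with all self-loops) give globally identifiable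
graphical continuous Lyapunov models, for every symmetric positive definite `C`. -/
theorem simple_graph_globally_identifiable {p : ℕ}
    (E : Set (Fin p × Fin p)) (hloops : ∀ i : Fin p, (i, i) ∈ E)
    (hsimple : IsSimpleDigraph E)
    (C : Matrix (Fin p) (Fin p) ℝ) (hC : C.PosDef) :
    GloballyIdentifiable E C := by
  intro M₁ M₂ h₁ _ h₂ _ S hS e₁ e₂
  set D : Matrix (Fin p) (Fin p) ℝ := M₁ - M₂ with hDdef
  have hD : D * S + S * Dᵀ = 0 := by
    have h : (M₁ * S + S * M₁ᵀ + C) - (M₂ * S + S * M₂ᵀ + C) = 0 := by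
      rw [e₁, e₂, sub_zero]
    rw [hDdef]
    simp only [Matrix.sub_mul, Matrix.mul_sub, Matrix.transpose_sub]
    rw [← h]; abel
  open scoped MatrixOrder in
  set R : Matrix (Fin p) (Fin p) ℝ := CFC.sqrt S with hRdef
  open scoped MatrixOrder in
  have hR2 : R * R = S := CFC.sqrt_mul_sqrt_self S hS.posSemidef.nonneg
  open scoped MatrixOrder in
  have hRsym : Rᵀ = R := by
    have h := (CFC.sqrt_nonneg S).posSemidef.1
    rwa [Matrix.IsHermitian, Matrix.conjTranspose_eq_transpose_of_trivial] at h
  have hRdet : IsUnit R.det := by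
    have h : R.det * R.det = S.det := by rw [← Matrix.det_mul, hR2]
    have hSdet : S.det ≠ 0 := ne_of_gt hS.det_pos
    exact isUnit_iff_ne_zero.mpr (fun h0 => hSdet (by rw [← h, h0, mul_zero]))
  have hRinv : R * R⁻¹ = 1 := Matrix.mul_nonsing_inv R hRdet
  have hRinv' : R⁻¹ * R = 1 := Matrix.nonsing_inv_mul R hRdet
  have c1 : ∀ X : Matrix (Fin p) (Fin p) ℝ, R * (R⁻¹ * X) = X := fun X => by
    rw [← Matrix.mul_assoc, hRinv, Matrix.one_mul]
  have c2 : ∀ X : Matrix (Fin p) (Fin p) ℝ, R⁻¹ * (R * X) = X := fun X => by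
    rw [← Matrix.mul_assoc, hRinv', Matrix.one_mul]
  set B : Matrix (Fin p) (Fin p) ℝ := R⁻¹ * D * R with hBdef
  have hDB : D = R * B * R⁻¹ := by
    rw [hBdef]
    simp only [Matrix.mul_assoc, c1, c2, hRinv, hRinv', Matrix.mul_one]
  have key2 : B + R * (Dᵀ * R⁻¹) = 0 := by
    have h := congrArg (fun X => R⁻¹ * X * R⁻¹) hD
    simp only [Matrix.zero_mul, Matrix.mul_zero] at h
    rw [← h, hBdef, ← hR2, Matrix.mul_add, Matrix.add_mul]
    simp only [Matrix.mul_assoc, c1, c2, hRinv, hRinv', Matrix.mul_one,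
      Matrix.one_mul]
  have hBt : Bᵀ = R * (Dᵀ * R⁻¹) := by
    rw [hBdef, Matrix.transpose_mul, Matrix.transpose_mul,
      Matrix.transpose_nonsing_inv, hRsym]
  have hskew : Bᵀ = -B := by
    rw [hBt, eq_neg_iff_add_eq_zero, add_comm]
    exact key2
  have htr1 : (D * D).trace = (B * B).trace := by
    rw [hDB]
    rw [show R * B * R⁻¹ * (R * B * R⁻¹) = R * (B * B * R⁻¹) from by
      simp only [Matrix.mul_assoc, c1, c2]]
    rw [Matrix.trace_mul_comm]
    simp only [Matrix.mul_assoc, hRinv', Matrix.mul_one]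
  have htr2 : (B * B).trace = -∑ i, ∑ j, (B i j)^2 := by
    have h : B * B = -(B * Bᵀ) := by rw [hskew]; simp [Matrix.mul_neg]
    rw [h, Matrix.trace_neg, neg_inj]
    simp only [Matrix.trace, Matrix.diag, Matrix.mul_apply,
      Matrix.transpose_apply, pow_two]
  have hDsupp : ∀ i j : Fin p, (i, j) ∉ E → D j i = 0 := by
    intro i j hij
    simp [hDdef, Matrix.sub_apply, h₁ i j hij, h₂ i j hij]
  have hoff : ∀ i j : Fin p, i ≠ j → D i j * D j i = 0 := by
    intro i j hij
    by_cases h : (j, i) ∈ E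
    · have hnot : (i, j) ∉ E := hsimple j i (Ne.symm hij) h
      rw [hDsupp i j hnot, mul_zero]
    · rw [hDsupp j i h, zero_mul]
  have htr3 : (D * D).trace = ∑ i, (D i i)^2 := by
    simp only [Matrix.trace, Matrix.diag, Matrix.mul_apply]
    refine Finset.sum_congr rfl (fun i _ => ?_)
    rw [Finset.sum_eq_single i]
    · rw [pow_two]
    · intro j _ hji
      exact hoff i j (Ne.symm hji)
    · intro h; exact absurd (Finset.mem_univ i) h
  have hsum : ∑ i, (D i i)^2 = -∑ i, ∑ j, (B i j)^2 := by
    rw [← htr3, htr1, htr2]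
  have h1 : (0:ℝ) ≤ ∑ i, (D i i)^2 :=
    Finset.sum_nonneg (fun i _ => sq_nonneg _)
  have h2 : (0:ℝ) ≤ ∑ i, ∑ j, (B i j)^2 :=
    Finset.sum_nonneg (fun i _ => Finset.sum_nonneg (fun j _ => sq_nonneg _))
  have hB0 : ∑ i, ∑ j, (B i j)^2 = 0 := by linarith
  have hBzero : B = 0 := by
    ext i j
    have hi : ∑ j, (B i j)^2 = 0 :=
      (Finset.sum_eq_zero_iff_of_nonneg
        (fun i _ => Finset.sum_nonneg (fun j _ => sq_nonneg (B i j)))).mp hB0 i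
        (Finset.mem_univ i)
    have := (Finset.sum_eq_zero_iff_of_nonneg
      (fun j _ => sq_nonneg (B i j))).mp hi j (Finset.mem_univ j)
    simpa [pow_two, mul_self_eq_zero] using this
  have hD0 : D = 0 := by rw [hDB, hBzero]; simp
  exact sub_eq_zero.mp hD0
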